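/- For each dimension d ≥ 1 there exist γ_0 > 0 and δ_0 > 0 with the following property. Let R > 0, τ > 0, δ ∈ (0, δ_0], and let f: B_{2R} → ℂ be measurable with |{(x,y) ∈ B_R × B_R : |f(x) + f(y) − f(x+y)| > τ}| < δ|B_R|^2. Then for every (x,y) ∈ B_{R/2} × B_{R/2} such that x, y, and x+y are each γ_0-rich (for f, τ, R), one has |f(x+y) − f(x) − f(y)| < 5τ. -/

import Mathlib

open MeasureTheory Filter Metric Set
noncomputable section

/-- ℝ^d as Euclidean space. -/
abbrev Ed (d : ℕ) := EuclideanSpace ℝ (Fin d)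

/-- x is γ-rich (for f, τ, R): for all y ∈ B_R outside a set of measure γ|B_R|,
|f(x+y) − f(x) − f(y)| ≤ τ. -/
def Rich {d : ℕ} (f : Ed d → ℂ) (τ R γ : ℝ) (x : Ed d) : Prop :=
  (volume {y : Ed d | y ∈ ball 0 R ∧ ¬ (‖f (x + y) - f x - f y‖ ≤ τ)}).toReal ≤
    γ * (volume (ball (0 : Ed d) R)).toReal

theorem rich_points_nearly_additive (d : ℕ) (hd : 1 ≤ d) :
    ∃ γ₀ δ₀ : ℝ, 0 < γ₀ ∧ 0 < δ₀ ∧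
      ∀ R τ δ : ℝ, 0 < R → 0 < τ → 0 < δ → δ ≤ δ₀ → ∀ f : Ed d → ℂ, Measurable f →
        (volume {z : Ed d × Ed d | z.1 ∈ ball 0 R ∧ z.2 ∈ ball 0 R ∧
            τ < ‖f z.1 + f z.2 - f (z.1 + z.2)‖}).toReal <
          δ * ((volume (ball (0 : Ed d) R)).toReal)^2 →
        ∀ x y : Ed d, x ∈ ball 0 (R/2) → y ∈ ball 0 (R/2) →
          Rich f τ R γ₀ x → Rich f τ R γ₀ y → Rich f τ R γ₀ (x + y) →
          ‖f (x + y) - f x - f y‖ < 5 * τ := by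
  have hne : Nonempty (Fin d) := ⟨⟨0, hd⟩⟩
  haveI : Nontrivial (Ed d) := inferInstance
  refine ⟨1 / (4 * 2 ^ d), 1, by positivity, one_pos, ?_⟩
  intro R τ δ hR hτ hδ hδ0 f hf hbad x y hx hy hrx hry hrxy
  set γ₀ : ℝ := 1 / (4 * 2 ^ d) with hγ
  set T : ℝ := (volume (ball (0 : Ed d) R)).toReal with hT
  have hBfin : volume (ball (0 : Ed d) R) ≠ ⊤ := measure_ball_lt_top.ne
  have hTpos : 0 < T := ENNReal.toReal_pos (measure_ball_pos volume 0 hR).ne' hBfin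
  set Bx := {z : Ed d | z ∈ ball 0 R ∧ ¬ (‖f (x + z) - f x - f z‖ ≤ τ)} with hBx
  set By := {z : Ed d | z ∈ ball 0 R ∧ ¬ (‖f (y + z) - f y - f z‖ ≤ τ)} with hBy
  set Bxy := {z : Ed d | z ∈ ball 0 R ∧ ¬ (‖f (x + y + z) - f (x + y) - f z‖ ≤ τ)} with hBxy
  have key : ∀ s : Set (Ed d), s ⊆ ball 0 R → (volume s).toReal ≤ γ₀ * T →
      volume s ≤ ENNReal.ofReal (γ₀ * T) := by
    intro s hs hle
    have hfin : volume s ≠ ⊤ := ((measure_mono hs).trans_lt measure_ball_lt_top).ne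
    rw [ENNReal.le_ofReal_iff_toReal_le hfin (by positivity)]
    exact hle
  have hBx' := key Bx (fun z hz => hz.1) hrx
  have hBy' := key By (fun z hz => hz.1) hry
  have hBxy' := key Bxy (fun z hz => hz.1) hrxy
  set S := (Bx ∪ Bxy) ∪ ((x + ·) ⁻¹' By) with hS
  have hpre : volume ((x + ·) ⁻¹' By) = volume By := measure_preimage_add volume x By
  have hSle : volume S ≤ ENNReal.ofReal (3 * (γ₀ * T)) := by
    calc volume S ≤ (volume Bx + volume Bxy) + volume ((x + ·) ⁻¹' By) := by
          exact le_trans (measure_union_le _ _) (add_le_add (measure_union_le _ _) le_rfl)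
      _ ≤ (ENNReal.ofReal (γ₀ * T) + ENNReal.ofReal (γ₀ * T)) + ENNReal.ofReal (γ₀ * T) := by
          rw [hpre]; exact add_le_add (add_le_add hBx' hBxy') hBy'
      _ = ENNReal.ofReal (3 * (γ₀ * T)) := by
          rw [← ENNReal.ofReal_add (by positivity) (by positivity),
            ← ENNReal.ofReal_add (by positivity) (by positivity)]
          ring_nf
  -- volume of small ball
  have hball : ∀ r : ℝ, 0 ≤ r → volume (ball (0 : Ed d) r)
      = ENNReal.ofReal (r ^ d) * volume (ball (0 : Ed d) 1) := by
    intro r hr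
    rw [Measure.addHaar_ball volume 0 hr, finrank_euclideanSpace_fin]
  have h1fin : volume (ball (0 : Ed d) 1) ≠ ⊤ := measure_ball_lt_top.ne
  have h1pos : 0 < (volume (ball (0 : Ed d) 1)).toReal :=
    ENNReal.toReal_pos (measure_ball_pos volume 0 one_pos).ne' h1fin
  set B1 : ℝ := (volume (ball (0 : Ed d) 1)).toReal with hB1
  have hTval : T = R ^ d * B1 := by
    rw [hT, hball R hR.le, ENNReal.toReal_mul, ENNReal.toReal_ofReal (by positivity)]
  have hhalfval : (volume (ball (0 : Ed d) (R/2))).toReal = (R/2) ^ d * B1 := by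
    rw [hball (R/2) (by positivity), ENNReal.toReal_mul,
      ENNReal.toReal_ofReal (by positivity)]
  have hhalffin : volume (ball (0 : Ed d) (R/2)) ≠ ⊤ := measure_ball_lt_top.ne
  have hlt : volume S < volume (ball (0 : Ed d) (R/2)) := by
    refine lt_of_le_of_lt hSle ?_
    rw [← ENNReal.ofReal_toReal hhalffin]
    apply (ENNReal.ofReal_lt_ofReal_iff_of_nonneg (by positivity)).mpr
    rw [hhalfval, hTval, hγ]
    have h2 : (0:ℝ) < (2:ℝ) ^ d := by positivity
    rw [div_pow]
    have : 3 * (1 / (4 * 2 ^ d) * (R ^ d * B1)) = (3/4) * (R ^ d / 2 ^ d * B1) := by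
      field_simp
    rw [this]
    have hpos : 0 < R ^ d / 2 ^ d * B1 := by positivity
    nlinarith
  obtain ⟨z, hz⟩ : (ball (0 : Ed d) (R/2) \ S).Nonempty := by
    rw [diff_nonempty]
    intro hsub
    exact absurd (measure_mono hsub) (not_le.mpr hlt)
  obtain ⟨hzball, hzS⟩ := hz
  have hzR : z ∈ ball (0 : Ed d) R := by
    rw [mem_ball_zero_iff] at hzball ⊢; linarith
  have hxz : x + z ∈ ball (0 : Ed d) R := by
    rw [mem_ball_zero_iff] at hx hzball ⊢
    calc ‖x + z‖ ≤ ‖x‖ + ‖z‖ := norm_add_le _ _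
      _ < R := by linarith
  rw [hS, mem_union, mem_union, not_or, not_or] at hzS
  obtain ⟨⟨hz1, hz2⟩, hz3⟩ := hzS
  have ha : ‖f (x + z) - f x - f z‖ ≤ τ := by
    by_contra h; exact hz1 ⟨hzR, h⟩
  have hb : ‖f (x + y + z) - f (x + y) - f z‖ ≤ τ := by
    by_contra h; exact hz2 ⟨hzR, h⟩
  have hc : ‖f (y + (x + z)) - f y - f (x + z)‖ ≤ τ := by
    by_contra h; exact hz3 ⟨hxz, h⟩
  have heq : y + (x + z) = x + y + z := by abel
  rw [heq] at hc
  have : f (x + y) - f x - f y =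
      (f (x + z) - f x - f z) + (f (x + y + z) - f y - f (x + z))
        - (f (x + y + z) - f (x + y) - f z) := by ring
  rw [this]
  calc ‖(f (x + z) - f x - f z) + (f (x + y + z) - f y - f (x + z))
        - (f (x + y + z) - f (x + y) - f z)‖
      ≤ ‖(f (x + z) - f x - f z) + (f (x + y + z) - f y - f (x + z))‖
        + ‖f (x + y + z) - f (x + y) - f z‖ := norm_sub_le _ _
    _ ≤ ‖f (x + z) - f x - f z‖ + ‖f (x + y + z) - f y - f (x + z)‖
        + ‖f (x + y + z) - f (x + y) - f z‖ := by
        exact add_le_add (norm_add_le _ _) le_rfl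
    _ ≤ 3 * τ := by linarith
    _ < 5 * τ := by linarith
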